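/- Let H⃗ be a directed acyclic graph with vertex ordering π that does not contain a k-reachable-cycle for any k ≥ 3 but contains a k-reachable-simplex for some k ≥ 3. Let k′ be the minimum k such that H⃗ contains a k-reachable-simplex, and let X, Y form a k′-reachable-simplex minimizing the total ordering Σ_{v ∈ X} π(v). Let V ⊆ V(H⃗) ∖ X be a set of vertices that is connected in the underlying undirected graph of H⃗ and such that every v ∈ V reaches at least one vertex of X. Then X is not contained in Reach(V). -/

import Mathlib

open scoped Classical

noncomputable section

/-- A hypergraph: a finite vertex set and a finite set of hyperedges, with vertices in `ℕ`. -/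
structure NHypergraph where
  verts : Finset ℕ
  edges : Finset (Finset ℕ)

namespace NHypergraph

/-- Well-formedness: every hyperedge is a nonempty subset of the vertex set. -/
def Good (G : NHypergraph) : Prop := ∀ e ∈ G.edges, e ⊆ G.verts ∧ e.Nonempty

/-- The rank of a hypergraph: the maximum arity of a hyperedge. -/
def rank (G : NHypergraph) : ℕ := G.edges.sup Finset.card

/-- The induced `l`-trimmed subhypergraph of `G` on `S`. -/
def trim (G : NHypergraph) (S : Finset ℕ) (l : ℕ∞) : NHypergraph :=
  ⟨G.verts ∩ S,
    (G.edges.filter fun e => ((e \ S).card : ℕ∞) ≤ l ∧ (e ∩ S).Nonempty).image fun e => e ∩ S⟩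

/-- The degree of a vertex: the number of hyperedges containing it. -/
def degree (G : NHypergraph) (v : ℕ) : ℕ := (G.edges.filter fun e => v ∈ e).card

/-- The `l`-degeneracy of a hypergraph: the least `κ` such that every nonempty induced
`l`-trimmed subhypergraph has a vertex of degree at most `κ`. -/
def degeneracy (G : NHypergraph) (l : ℕ∞) : ℕ :=
  sInf {κ : ℕ | ∀ S ⊆ G.verts, S.Nonempty → ∃ v ∈ S, (G.trim S l).degree v ≤ κ}

/-- Two vertices are adjacent if some hyperedge contains both. -/
def Adj (G : NHypergraph) (u v : ℕ) : Prop := ∃ e ∈ G.edges, u ∈ e ∧ v ∈ e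

/-- A hypergraph is connected if any two vertices are joined by a path of adjacencies. -/
def Connected (G : NHypergraph) : Prop :=
  ∀ u ∈ G.verts, ∀ v ∈ G.verts, Relation.ReflTransGen G.Adj u v

/-- `D` is a connected component of `G`. -/
def IsComponent (G : NHypergraph) (D : Finset ℕ) : Prop :=
  ∃ v ∈ G.verts, D = G.verts.filter fun u => Relation.ReflTransGen G.Adj v u

/-- The induced subhypergraph (only hyperedges entirely inside `S`). -/
def induce (G : NHypergraph) (S : Finset ℕ) : NHypergraph :=
  ⟨G.verts ∩ S, G.edges.filter fun e => e ⊆ S⟩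

end NHypergraph

/-- `f` is a homomorphism from `H` to `G`. -/
def IsHom (H G : NHypergraph) (f : ℕ → ℕ) : Prop :=
  (∀ v ∈ H.verts, f v ∈ G.verts) ∧ ∀ e ∈ H.edges, e.image f ∈ G.edges

/-- `Hom(G,H)`: the number of homomorphisms from `H` to `G`
(normalized to be `0` off `V(H)` so that the set is finite). -/
def homCount (G H : NHypergraph) : ℕ :=
  Set.ncard {f : ℕ → ℕ | IsHom H G f ∧ ∀ v ∉ H.verts, f v = 0}

/-- `Homr(G,H)`: the number of arity-preserving homomorphisms from `H` to `G`. -/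
def homrCount (G H : NHypergraph) : ℕ :=
  Set.ncard {f : ℕ → ℕ | IsHom H G f ∧ (∀ e ∈ H.edges, (e.image f).card = e.card) ∧
    ∀ v ∉ H.verts, f v = 0}

/-- Hypergraph isomorphism. -/
def Isomorphic (H H' : NHypergraph) : Prop :=
  ∃ f : ℕ → ℕ, Set.BijOn f ↑H.verts ↑H'.verts ∧
    H'.edges = H.edges.image fun e => e.image f

/-- The quotient of `H` under the partition of `V(H)` into the fibers of `f`. -/
def quotientBy (H : NHypergraph) (f : ℕ → ℕ) : NHypergraph :=
  ⟨H.verts.image f, H.edges.image fun e => e.image f⟩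

/-- `H'` is a quotient of `H` (by some partition of `V(H)`). -/
def IsQuotient (H H' : NHypergraph) : Prop := ∃ f : ℕ → ℕ, H' = quotientBy H f

/-- Each fiber of `f` induces a connected (trimmed) subhypergraph of `H`. -/
def ContractMap (H : NHypergraph) (f : ℕ → ℕ) : Prop :=
  ∀ w : ℕ, (H.trim (H.verts.filter fun v => f v = w) ⊤).Connected

/-- `H'` belongs to the contract set `Q^c(H)`: it is a quotient of `H` by a partition
all of whose parts induce connected subhypergraphs of `H`. -/
def IsContractQuotient (H H' : NHypergraph) : Prop :=
  ∃ f : ℕ → ℕ, ContractMap H f ∧ H' = quotientBy H f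

/-- `α(H')`: the number of partitions `τ` of `V(H)` with connected parts with `H/τ ≅ H'`. -/
def alphaCount (H H' : NHypergraph) : ℕ :=
  Set.ncard {P : Finset (Finset ℕ) | ∃ f : ℕ → ℕ, ContractMap H f ∧
    Isomorphic (quotientBy H f) H' ∧
    P = (H.verts.image f).image fun w => H.verts.filter fun v => f v = w}

/-- `|Aut(H')|`: the number of automorphisms of `H'`. -/
def autCount (H' : NHypergraph) : ℕ :=
  Set.ncard {f : ℕ → ℕ | (∀ v ∉ H'.verts, f v = v) ∧ Set.BijOn f ↑H'.verts ↑H'.verts ∧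
    H'.edges.image (fun e => e.image f) = H'.edges}

/-- The arc relation of the `l`-skeleton of the DAH obtained by ordering `G` by `π`. -/
def SkelArc (G : NHypergraph) (π : ℕ → ℕ) (l : ℕ∞) (u v : ℕ) : Prop :=
  ∃ e ∈ G.edges, u ∈ e ∧ v ∈ e ∧ π u < π v ∧
    ((e.filter fun w => π w < π u).card : ℕ∞) ≤ l

/-- The `l`-outdegree of a vertex in the DAH `(G, π)`. -/
def loutdeg (G : NHypergraph) (π : ℕ → ℕ) (l : ℕ∞) (u : ℕ) : ℕ :=
  (G.verts.filter fun v => SkelArc G π l u v).card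

/-- Vertices reachable from `v` by a directed path. -/
def Reach (Adj : ℕ → ℕ → Prop) (v : ℕ) : Set ℕ := {u | Relation.ReflTransGen Adj v u}

/-- Vertices reachable from a set `A`. -/
def ReachSet (Adj : ℕ → ℕ → Prop) (A : Set ℕ) : Set ℕ :=
  {u | ∃ a ∈ A, Relation.ReflTransGen Adj a u}

/-- The sources of a DAG: vertices with no incoming arc. -/
def sourcesOf (V : Finset ℕ) (Adj : ℕ → ℕ → Prop) : Finset ℕ :=
  V.filter fun v => ¬ ∃ u ∈ V, Adj u v

/-- `b` lies on the (unique) path between `i` and `j` in `T`. -/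
def OnPath {n : ℕ} (T : SimpleGraph (Fin n)) (i j b : Fin n) : Prop :=
  ∃ p : T.Walk i j, p.IsPath ∧ b ∈ p.support

/-- `(T, β)` is a DAG-tree decomposition of the DAG `(V, Adj)`. -/
def IsDTD (V : Finset ℕ) (Adj : ℕ → ℕ → Prop) {n : ℕ}
    (T : SimpleGraph (Fin n)) (β : Fin n → Finset ℕ) : Prop :=
  T.IsTree ∧ (∀ i, β i ⊆ sourcesOf V Adj) ∧ (∀ s ∈ sourcesOf V Adj, ∃ i, s ∈ β i) ∧
    ∀ i j b, OnPath T i j b →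
      ReachSet Adj ↑(β i) ∩ ReachSet Adj ↑(β j) ⊆ ReachSet Adj ↑(β b)

/-- The DAG-treewidth of the DAG `(V, Adj)`. -/
def dagTreewidth (V : Finset ℕ) (Adj : ℕ → ℕ → Prop) : ℕ :=
  sInf {w : ℕ | ∃ (n : ℕ) (T : SimpleGraph (Fin n)) (β : Fin n → Finset ℕ),
    IsDTD V Adj T β ∧ ∀ i, (β i).card ≤ w}

/-- The `l`-DAG-treewidth of the DAH `(H, π)`. -/
def ldtwOriented (H : NHypergraph) (π : ℕ → ℕ) (l : ℕ∞) : ℕ :=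
  dagTreewidth H.verts (SkelArc H π l)

/-- The `l`-DAG-treewidth of an undirected hypergraph:
the maximum over all acyclic orientations. -/
def ldtw (H : NHypergraph) (l : ℕ∞) : ℕ :=
  sSup {w : ℕ | ∃ π : ℕ → ℕ, Set.InjOn π ↑H.verts ∧ w = ldtwOriented H π l}

/-- `f` is a DAH homomorphism from `(K, πK)` to `(G, πG)`. -/
def IsDAHHom (K : NHypergraph) (πK : ℕ → ℕ) (G : NHypergraph) (πG : ℕ → ℕ)
    (f : ℕ → ℕ) : Prop :=
  (∀ v ∈ K.verts, f v ∈ G.verts) ∧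
    ∀ e ∈ K.edges, e.image f ∈ G.edges ∧
      ∀ u ∈ e, ∀ v ∈ e, πK u < πK v → πG (f u) < πG (f v)

/-- The number of DAH homomorphisms from `(K, πK)` to `(G, πG)`. -/
def dahHomCount (G : NHypergraph) (πG : ℕ → ℕ) (K : NHypergraph) (πK : ℕ → ℕ) : ℕ :=
  Set.ncard {f : ℕ → ℕ | IsDAHHom K πK G πG f ∧ ∀ v ∉ K.verts, f v = 0}

/-- Two orderings of `H` give isomorphic acyclic orientations. -/
def OrientIso (H : NHypergraph) (π₁ π₂ : ℕ → ℕ) : Prop :=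
  ∃ g : ℕ → ℕ, Set.BijOn g ↑H.verts ↑H.verts ∧
    (H.edges.image fun e => e.image g) = H.edges ∧
    ∀ u ∈ H.verts, ∀ v ∈ H.verts, (π₁ u < π₁ v ↔ π₂ (g u) < π₂ (g v))

/-- The vertices of `H` that are `l`-reachable from the set `S` in the DAH `(H, π)`. -/
def reachClosure (H : NHypergraph) (π : ℕ → ℕ) (l : ℕ∞) (S : Set ℕ) : Finset ℕ :=
  H.verts.filter fun v => v ∈ ReachSet (SkelArc H π l) S

/-- `H⃗[S]_l`: the sub-DAH induced (0-trimmed) on the vertices `l`-reachable from `S`. -/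
def subDAH (H : NHypergraph) (π : ℕ → ℕ) (l : ℕ∞) (S : Set ℕ) : NHypergraph :=
  H.trim (reachClosure H π l S) 0

/-- `B'` is a child of `B` in the tree `T` rooted at `root`. -/
def IsChild {n : ℕ} (T : SimpleGraph (Fin n)) (root B B' : Fin n) : Prop :=
  T.Adj B B' ∧ OnPath T root B' B

/-- `Γ(B)`: the union of the bags in the subtree of `T` rooted at `B`. -/
def GammaSet {n : ℕ} (T : SimpleGraph (Fin n)) (root : Fin n)
    (β : Fin n → Finset ℕ) (B : Fin n) : Set ℕ :=
  {s | ∃ i, OnPath T root i B ∧ s ∈ β i}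

/-- `ext(φ, K⃗, G⃗)` relative to the agreement domain `dom`: the number of DAH homomorphisms
from `(K, πK)` to `(G, πG)` that agree with `φ` on `V(K) ∩ dom`. -/
def extCount (K : NHypergraph) (πK : ℕ → ℕ) (G : NHypergraph) (πG : ℕ → ℕ)
    (dom : Set ℕ) (φ : ℕ → ℕ) : ℕ :=
  Set.ncard {ψ : ℕ → ℕ | IsDAHHom K πK G πG ψ ∧ (∀ v ∉ K.verts, ψ v = 0) ∧
    ∀ v ∈ (↑K.verts : Set ℕ) ∩ dom, ψ v = φ v}

/-- The hyperedges `E_i` associated to a core `C` and a component `D`. -/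
def obstructionEdges (H : NHypergraph) (C D : Finset ℕ) : Finset (Finset ℕ) :=
  H.edges.filter fun e => e ⊆ C ∪ D ∧ 1 < e.card

/-- `H` is an `l`-obstruction (a member of `𝓗_l`). -/
def IsLObstruction (l : ℕ∞) (H : NHypergraph) : Prop :=
  ∃ k, 3 ≤ k ∧ ∃ C ⊆ H.verts, C.card = k ∧
    (∀ e ∈ (H.trim C l).edges, e.card ≤ 1) ∧
    (∀ D : Finset ℕ, (H.trim (H.verts \ C) ⊤).IsComponent D →
      ¬ C ⊆ (obstructionEdges H C D).biUnion id) ∧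
    ∃ Dmap : ℕ → Finset ℕ, Set.InjOn Dmap ↑C ∧
      ∀ c ∈ C, (H.trim (H.verts \ C) ⊤).IsComponent (Dmap c) ∧
        C.erase c ⊆ (obstructionEdges H C (Dmap c)).biUnion id ∧
        ∀ e ∈ obstructionEdges H C (Dmap c), c ∉ e

/-- `H` is `𝓗_l` ITS free: no induced ∞-trimmed subhypergraph is an `l`-obstruction. -/
def ITSFree (l : ℕ∞) (H : NHypergraph) : Prop :=
  ∀ S ⊆ H.verts, ¬ IsLObstruction l (H.trim S ⊤)

/-- The hypergraph `(Hv, He)` is an `l`-connector of `X ⊆ Hv`. -/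
def IsConnector (l : ℕ∞) (Hv : Finset ℕ) (He : Finset (Finset ℕ)) (X : Finset ℕ) : Prop :=
  X ⊆ Hv ∧ NHypergraph.Connected ⟨Hv, He⟩ ∧
    (∀ e ∈ He, 2 ≤ (e ∩ X).card → l < ((e \ X).card : ℕ∞)) ∧
    ∃ V' : Finset ℕ, (NHypergraph.trim ⟨Hv, He⟩ (Hv \ X) ⊤).IsComponent V' ∧
      ∀ xx ∈ X, ∃ v ∈ V', ∃ e ∈ He, xx ∈ e ∧ v ∈ e

/-- Witness data for membership of `H` in `𝓗_{l,k}`. -/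
def InHlkWitness (l : ℕ∞) (k : ℕ) (H : NHypergraph)
    (x : ℕ → ℕ) (Vp : ℕ → Finset ℕ) (Ep : ℕ → Finset (Finset ℕ)) : Prop :=
  Set.InjOn x ↑(Finset.range k) ∧
  (∀ i < k, ∀ j < k, i ≠ j → Disjoint (Vp i) (Vp j)) ∧
  (∀ i < k, Disjoint (Vp i) ((Finset.range k).image x)) ∧
  H.verts = (Finset.range k).image x ∪ (Finset.range k).biUnion Vp ∧
  (∀ i < k, ∀ j < k, i ≠ j → Disjoint (Ep i) (Ep j)) ∧
  H.edges = (Finset.range k).biUnion Ep ∧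
  ∀ i < k,
    (∀ e ∈ Ep i, e ⊆ Vp i ∪ (((Finset.range k).image x).erase (x i))) ∧
    IsConnector l (Vp i ∪ (((Finset.range k).image x).erase (x i))) (Ep i)
      (((Finset.range k).image x).erase (x i))

/-- `H ∈ 𝓗_{l,k}`. -/
def InHlk (l : ℕ∞) (k : ℕ) (H : NHypergraph) : Prop :=
  ∃ x Vp Ep, InHlkWitness l k H x Vp Ep

/-- The DAG `(V, Adj)` contains a `k`-reachable-cycle. -/
def HasReachCycle (V : Finset ℕ) (Adj : ℕ → ℕ → Prop) (k : ℕ) : Prop :=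
  ∃ x y : ZMod k → ℕ, Function.Injective x ∧ Function.Injective y ∧
    (∀ i, x i ∈ V) ∧ (∀ i, y i ∈ V) ∧
    (∀ i, x i ∈ Reach Adj (y i) ∧ x (i + 1) ∈ Reach Adj (y i)) ∧
    ∀ v ∈ V, 2 ≤ (Set.range x ∩ Reach Adj v).ncard →
      ∃ i, Set.range x ∩ Reach Adj v = {x i, x (i + 1)}

/-- `(x, y)` form a `k`-reachable-simplex in the DAG `(V, Adj)`. -/
def IsReachSimplexPair (V : Finset ℕ) (Adj : ℕ → ℕ → Prop) {k : ℕ}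
    (x y : Fin k → ℕ) : Prop :=
  Function.Injective x ∧ Function.Injective y ∧
    (∀ i, x i ∈ V) ∧ (∀ i, y i ∈ V) ∧
    (∀ i j, j ≠ i → x j ∈ Reach Adj (y i)) ∧
    ¬ ∃ v ∈ V, ∀ i, x i ∈ Reach Adj v

/-- The DAG `(V, Adj)` contains a `k`-reachable-simplex. -/
def HasReachSimplex (V : Finset ℕ) (Adj : ℕ → ℕ → Prop) (k : ℕ) : Prop :=
  ∃ x y : Fin k → ℕ, IsReachSimplexPair V Adj x y

/-- `F` is α-acyclic. -/
def IsAlphaAcyclic (F : NHypergraph) : Prop :=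
  ∃ (n : ℕ) (T : SimpleGraph (Fin n)) (f : Fin n → Finset ℕ),
    T.IsTree ∧ Function.Injective f ∧ (∀ i, f i ∈ F.edges) ∧
    (∀ e ∈ F.edges, ∃ i, f i = e) ∧
    ∀ i j b, OnPath T i j b → f i ∩ f j ⊆ f b

/-- The reachability hypergraph of the DAG `(V, Adj)`. -/
def reachHypergraph (V : Finset ℕ) (Adj : ℕ → ℕ → Prop) : NHypergraph :=
  ⟨V, (sourcesOf V Adj).image fun s => V.filter fun v => v ∈ Reach Adj s⟩

/-- The clique completion of a hypergraph. -/
def cliqueCompletion (H : NHypergraph) : SimpleGraph ℕ where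
  Adj u v := u ≠ v ∧ ∃ e ∈ H.edges, u ∈ e ∧ v ∈ e
  symm := by
    constructor
    intro u v h
    obtain ⟨huv, e, he, hu, hv⟩ := h
    exact ⟨huv.symm, e, he, hv, hu⟩
  loopless := by
    constructor
    intro u h
    exact h.1 rfl

/-- `G` has an induced cycle on `n` vertices. -/
def HasInducedCycle (G : SimpleGraph ℕ) (n : ℕ) : Prop :=
  ∃ f : ZMod n → ℕ, Function.Injective f ∧
    ∀ i j : ZMod n, G.Adj (f i) (f j) ↔ (j = i + 1 ∨ i = j + 1)

/-- The number of colorful homomorphisms from `H` to `G` under the coloring `c`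
(with color set `{1, …, |V(H)|}`). -/
def colHomCount (G H : NHypergraph) (c : ℕ → ℕ) : ℕ :=
  Set.ncard {f : ℕ → ℕ | IsHom H G f ∧ (∀ v ∉ H.verts, f v = 0) ∧
    Set.BijOn (fun v => c (f v)) ↑H.verts ↑(Finset.Icc 1 H.verts.card)}

/-- The tensor product of hypergraphs (vertex pairs encoded by `Nat.pair`). -/
def tensor (G H : NHypergraph) : NHypergraph :=
  ⟨(G.verts ×ˢ H.verts).image fun p => Nat.pair p.1 p.2,
    ((G.verts ×ˢ H.verts).image fun p => Nat.pair p.1 p.2).powerset.filter fun e =>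
      (e.image fun m => (Nat.unpair m).1) ∈ G.edges ∧
      (e.image fun m => (Nat.unpair m).2) ∈ H.edges⟩

/-- `Sub(G,H)`: the number of subhypergraphs of `G` isomorphic to `H`. -/
def subCount (G H : NHypergraph) : ℕ :=
  Set.ncard {p : Finset ℕ × Finset (Finset ℕ) |
    p.1 ⊆ G.verts ∧ (∀ e ∈ p.2, e ∈ G.edges ∧ e ⊆ p.1) ∧ Isomorphic H ⟨p.1, p.2⟩}

/-- Vertex renaming used in the construction of `G^H_l`:
core vertices go to the matching vertex of the colorful hyperedge `e` of `G`,
vertices of `H'` outside the core go to their fresh copy indexed by `e`, and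
vertices outside `H'` go to their unique copy. -/
def liftVert (S X : Finset ℕ) (π c : ℕ → ℕ) (e : Finset ℕ) (v : ℕ) : ℕ :=
  if v ∈ X then Nat.pair 0 ((e.filter fun u => c u = π v).sum id)
  else if v ∈ S then Nat.pair 2 (Nat.pair (Encodable.encode e) v)
  else Nat.pair 1 v

/-- The hypergraph `G^H_l` from the hardness construction. -/
def GHl (H G : NHypergraph) (S X : Finset ℕ) (Vp : ℕ → Finset ℕ) (π c : ℕ → ℕ)
    (k : ℕ) : NHypergraph :=
  ⟨(G.verts.image fun v => Nat.pair 0 v) ∪ ((H.verts \ S).image fun v => Nat.pair 1 v) ∪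
      (Finset.range k).biUnion fun i =>
        (G.edges.filter fun e => e.card = k - 1 ∧ e.image c = (Finset.range k).erase i).biUnion
          fun e => (Vp i).image fun v => Nat.pair 2 (Nat.pair (Encodable.encode e) v),
    ((H.edges.filter fun e => e ⊆ H.verts \ S).image fun e => e.image fun v => Nat.pair 1 v) ∪
      (Finset.range k).biUnion fun i =>
        (G.edges.filter fun e => e.card = k - 1 ∧ e.image c = (Finset.range k).erase i).biUnion
          fun e =>
            (H.edges.filter fun e' => ¬ e' ⊆ H.verts \ S ∧
                e' ⊆ X ∪ Vp i ∪ (H.verts \ S)).image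
              fun e' => e'.image (liftVert S X π c e)⟩

/-- The coloring of `G^H_l`. -/
def GHlColor (π c : ℕ → ℕ) (m : ℕ) : ℕ :=
  if (Nat.unpair m).1 = 0 then c (Nat.unpair m).2
  else if (Nat.unpair m).1 = 1 then π (Nat.unpair m).2
  else π (Nat.unpair (Nat.unpair m).2).2

/-- The grouping of the vertices of `G^H_l`: copied vertices first,
then the vertices of `G`, then the vertices of `V^ext`. -/
def GHlGroup (m : ℕ) : ℕ :=
  if (Nat.unpair m).1 = 2 then 0 else if (Nat.unpair m).1 = 0 then 1 else 2

namespace Stmt9Aux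

def Co (V : Finset ℕ) (Adj : ℕ → ℕ → Prop) (a b : ℕ) : Prop :=
  ∃ u ∈ V, a ∈ Reach Adj u ∧ b ∈ Reach Adj u

def JR (V : Finset ℕ) (Adj : ℕ → ℕ → Prop) (A : Finset ℕ) : Prop :=
  ∃ u ∈ V, ∀ a ∈ A, a ∈ Reach Adj u

theorem co_symm {V : Finset ℕ} {Adj : ℕ → ℕ → Prop} {a b : ℕ}
    (h : Co V Adj a b) : Co V Adj b a := by
  obtain ⟨u, hu, h1, h2⟩ := h; exact ⟨u, hu, h2, h1⟩

theorem reach_trans {Adj : ℕ → ℕ → Prop} {a b c : ℕ}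
    (h1 : b ∈ Reach Adj a) (h2 : c ∈ Reach Adj b) : c ∈ Reach Adj a :=
  Relation.ReflTransGen.trans h1 h2

theorem pi_le {Adj : ℕ → ℕ → Prop} (π : ℕ → ℕ)
    (htopo : ∀ u v, Adj u v → π u < π v) {a b : ℕ} (h : b ∈ Reach Adj a) :
    π a ≤ π b := by
  induction h with
  | refl => exact le_rfl
  | tail _ hbc ih => exact le_of_lt (lt_of_le_of_lt ih (htopo _ _ hbc))

theorem pi_lt {Adj : ℕ → ℕ → Prop} (π : ℕ → ℕ)
    (htopo : ∀ u v, Adj u v → π u < π v) {a b : ℕ} (h : b ∈ Reach Adj a)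
    (hne : a ≠ b) : π a < π b := by
  rcases Relation.ReflTransGen.cases_head h with heq | ⟨c, hac, hcb⟩
  · exact absurd heq hne
  · exact lt_of_lt_of_le (htopo _ _ hac) (pi_le π htopo hcb)

theorem exists_chain (r : ℕ → ℕ → Prop) {a b : ℕ} (h : Relation.ReflTransGen r a b) :
    ∃ (n : ℕ) (p : ℕ → ℕ), p 0 = a ∧ p n = b ∧ ∀ j < n, r (p j) (p (j+1)) := by
  induction h with
  | refl => exact ⟨0, fun _ => a, rfl, rfl, by omega⟩
  | @tail b c hab hbc ih =>
    obtain ⟨n, p, h0, hnb, hs⟩ := ih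
    refine ⟨n+1, fun j => if j ≤ n then p j else c, by simp [h0], by simp, ?_⟩
    intro j hj
    rcases Nat.lt_or_ge j n with h1 | h1
    · simpa [Nat.le_of_lt h1, Nat.succ_le_of_lt h1] using hs j h1
    · have hjn : j = n := by omega
      subst hjn
      simp [hnb, hbc]

theorem exists_min_path (r : ℕ → ℕ → Prop) (P : ℕ → Prop) (a : ℕ)
    (hex : ∃ b, Relation.ReflTransGen r a b ∧ P b) :
    ∃ (n : ℕ) (p : ℕ → ℕ), p 0 = a ∧ (∀ j < n, r (p j) (p (j+1))) ∧ P (p n) ∧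
      ∀ (m : ℕ) (q : ℕ → ℕ), q 0 = a → (∀ j < m, r (q j) (q (j+1))) → P (q m) → n ≤ m := by
  set Q : ℕ → Prop := fun n => ∃ p : ℕ → ℕ, p 0 = a ∧ (∀ j < n, r (p j) (p (j+1))) ∧ P (p n)
    with hQ
  have hQex : ∃ n, Q n := by
    obtain ⟨b, hb, hPb⟩ := hex
    obtain ⟨n, p, h0, hnb, hs⟩ := exists_chain r hb
    exact ⟨n, p, h0, hs, by rwa [hnb]⟩
  obtain ⟨p, h0, hs, hP⟩ := Nat.find_spec hQex
  exact ⟨Nat.find hQex, p, h0, hs, hP, fun m q hq0 hqs hqP =>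
    Nat.find_min' hQex ⟨q, hq0, hqs, hqP⟩⟩

section
variable (r : ℕ → ℕ → Prop) (P : ℕ → Prop) (n : ℕ) (p : ℕ → ℕ)
variable (hstep : ∀ j < n, r (p j) (p (j+1))) (hPn : P (p n))
variable (hmin : ∀ (m : ℕ) (q : ℕ → ℕ), q 0 = p 0 → (∀ j < m, r (q j) (q (j+1))) → P (q m) → n ≤ m)

include hstep hmin in
theorem min_path_no_early : ∀ j < n, ¬ P (p j) := by
  intro j hj hP
  have := hmin j p rfl (fun j' hj' => hstep j' (by omega)) hP
  omega

include hstep hPn hmin in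
theorem min_path_no_chord : ∀ a b, a + 2 ≤ b → b ≤ n → ¬ r (p a) (p b) := by
  intro a b hab hbn hr
  set d := b - a - 1 with hd
  set q : ℕ → ℕ := fun j => if j ≤ a then p j else p (j + d) with hq
  have h1 : q 0 = p 0 := by simp [hq]
  have hsteps : ∀ j < n - d, r (q j) (q (j+1)) := by
    intro j hj
    rcases lt_trichotomy j a with h | h | h
    · have : j + 1 ≤ a := h
      simp only [hq, if_pos (Nat.le_of_lt h), if_pos this]
      exact hstep j (by omega)
    · subst h
      have e1 : q j = p j := by simp [hq]
      have e2 : q (j+1) = p b := by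
        have : ¬ (j + 1 ≤ j) := by omega
        simp only [hq, if_neg this]
        congr 1
        omega
      rw [e1, e2]; exact hr
    · have h2 : ¬ (j ≤ a) := by omega
      have h3 : ¬ (j + 1 ≤ a) := by omega
      simp only [hq, if_neg h2, if_neg h3]
      have : j + 1 + d = (j + d) + 1 := by omega
      rw [this]
      exact hstep (j + d) (by omega)
  have hPend : P (q (n - d)) := by
    have h2 : ¬ (n - d ≤ a) := by omega
    have h3 : n - d + d = n := by omega
    simp only [hq, if_neg h2, h3]
    exact hPn
  have := hmin (n - d) q h1 hsteps hPend
  omega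

include hstep hPn hmin in
theorem min_path_inj : ∀ a b, a < b → b ≤ n → p a ≠ p b := by
  intro a b hab hbn heq
  rcases Nat.eq_or_lt_of_le hbn with hb | hb
  · have hPa : P (p a) := by rw [heq, hb]; exact hPn
    have := hmin a p rfl (fun j' hj' => hstep j' (by omega)) hPa
    omega
  · set d := b - a with hd
    set q : ℕ → ℕ := fun j => if j ≤ a then p j else p (j + d) with hq
    have h1 : q 0 = p 0 := by simp [hq]
    have hsteps : ∀ j < n - d, r (q j) (q (j+1)) := by
      intro j hj
      rcases lt_trichotomy j a with h | h | h
      · have : j + 1 ≤ a := h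
        simp only [hq, if_pos (Nat.le_of_lt h), if_pos this]
        exact hstep j (by omega)
      · subst h
        have e1 : q j = p b := by simp [hq, heq]
        have e2 : q (j+1) = p (b+1) := by
          have : ¬ (j + 1 ≤ j) := by omega
          simp only [hq, if_neg this]
          congr 1
          omega
        rw [e1, e2]; exact hstep b (by omega)
      · have h2 : ¬ (j ≤ a) := by omega
        have h3 : ¬ (j + 1 ≤ a) := by omega
        simp only [hq, if_neg h2, if_neg h3]
        have : j + 1 + d = (j + d) + 1 := by omega
        rw [this]
        exact hstep (j + d) (by omega)
    have hPend : P (q (n - d)) := by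
      have h2 : ¬ (n - d ≤ a) := by omega
      have h3 : n - d + d = n := by omega
      simp only [hq, if_neg h2, h3]
      exact hPn
    have := hmin (n - d) q h1 hsteps hPend
    omega

end

theorem simplex_of_minimal (V : Finset ℕ) (Adj : ℕ → ℕ → Prop)
    (A : Finset ℕ) (n : ℕ) (hA : A.card = n)
    (hAV : ∀ a ∈ A, a ∈ V)
    (hJe : ∀ a ∈ A, JR V Adj (A.erase a))
    (hnJ : ¬ JR V Adj A) :
    ∃ x₂ y₂ : Fin n → ℕ, IsReachSimplexPair V Adj x₂ y₂ ∧ Finset.univ.image x₂ = A := by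
  set e := A.orderIsoOfFin hA with he
  set x₂ : Fin n → ℕ := fun t => (e t : ℕ) with hx₂
  have hx₂A : ∀ t, x₂ t ∈ A := fun t => (e t).2
  have hx₂inj : Function.Injective x₂ := fun a b h =>
    e.injective (Subtype.ext h)
  have himg : Finset.univ.image x₂ = A := by
    apply Finset.Subset.antisymm
    · intro a ha
      obtain ⟨t, _, rfl⟩ := Finset.mem_image.mp ha
      exact hx₂A t
    · intro a ha
      refine Finset.mem_image.mpr ⟨e.symm ⟨a, ha⟩, Finset.mem_univ _, ?_⟩
      simp [hx₂]
  choose! u huV hur using hJe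
  set y₂ : Fin n → ℕ := fun t => u (x₂ t) with hy₂
  have hy₂r : ∀ t s, s ≠ t → x₂ s ∈ Reach Adj (y₂ t) := by
    intro t s hst
    apply hur (x₂ t) (hx₂A t)
    exact Finset.mem_erase.mpr ⟨fun h => hst (hx₂inj h), hx₂A s⟩
  have hy₂V : ∀ t, y₂ t ∈ V := fun t => huV (x₂ t) (hx₂A t)
  have hy₂inj : Function.Injective y₂ := by
    intro s t hst
    by_contra hne
    apply hnJ
    refine ⟨y₂ s, hy₂V s, ?_⟩
    intro a ha
    rcases eq_or_ne a (x₂ s) with rfl | hax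
    · rw [hst]
      apply hur (x₂ t) (hx₂A t)
      refine Finset.mem_erase.mpr ⟨fun h => hne (hx₂inj h), ha⟩
    · apply hur (x₂ s) (hx₂A s)
      exact Finset.mem_erase.mpr ⟨hax, ha⟩
  refine ⟨x₂, y₂, ⟨hx₂inj, hy₂inj, fun t => hAV _ (hx₂A t), hy₂V, hy₂r, ?_⟩, himg⟩
  rintro ⟨v, hv, hvr⟩
  apply hnJ
  refine ⟨v, hv, fun a ha => ?_⟩
  have : x₂ (e.symm ⟨a, ha⟩) = a := by simp [hx₂]
  rw [← this]; exact hvr _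

theorem induced_cycle (V : Finset ℕ) (Adj : ℕ → ℕ → Prop)
    (l : ℕ) (hl : 4 ≤ l) (c : ℕ → ℕ)
    (hinj : ∀ m < l, ∀ m' < l, c m = c m' → m = m')
    (hV : ∀ m < l, c m ∈ V)
    (hcons : ∀ m < l, Co V Adj (c m) (c ((m+1) % l)))
    (hnon : ∀ m < l, ∀ m' < l, m' ≠ m → m' ≠ (m+1) % l → m ≠ (m'+1) % l →
      ¬ Co V Adj (c m) (c m')) :
    HasReachCycle V Adj l := by
  haveI : NeZero l := ⟨by omega⟩
  set x : ZMod l → ℕ := fun z => c z.val with hx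
  have hvlt : ∀ z : ZMod l, z.val < l := fun z => ZMod.val_lt z
  have hvinj : Function.Injective (ZMod.val : ZMod l → ℕ) := ZMod.val_injective l
  have hv1 : (1 : ZMod l).val = 1 := by
    rw [← Nat.cast_one, ZMod.val_natCast]
    exact Nat.mod_eq_of_lt (by omega)
  have hsucc : ∀ z : ZMod l, (z + 1).val = (z.val + 1) % l := by
    intro z; rw [ZMod.val_add, hv1]
  have hne0 : ∀ a : ℕ, 0 < a → a < l → ((a : ZMod l) ≠ 0) := by
    intro a ha hal h
    rw [ZMod.natCast_eq_zero_iff] at h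
    have := Nat.le_of_dvd ha h
    omega
  have h10 : (1 : ZMod l) ≠ 0 := by
    have : ((1:ℕ) : ZMod l) ≠ 0 := hne0 1 (by omega) (by omega)
    simpa using this
  have h20 : (1 + 1 : ZMod l) ≠ 0 := by
    have : ((2:ℕ) : ZMod l) ≠ 0 := hne0 2 (by omega) (by omega)
    have e : ((2:ℕ) : ZMod l) = 1 + 1 := by push_cast; ring
    rwa [e] at this
  have h30 : (1 + 1 + 1 : ZMod l) ≠ 0 := by
    have : ((3:ℕ) : ZMod l) ≠ 0 := hne0 3 (by omega) (by omega)
    have e : ((3:ℕ) : ZMod l) = 1 + 1 + 1 := by push_cast; ring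
    rwa [e] at this
  have hxinj : Function.Injective x := by
    intro a b h
    exact hvinj (hinj _ (hvlt a) _ (hvlt b) h)
  have hco' : ∀ z : ZMod l, Co V Adj (x z) (x (z + 1)) := by
    intro z
    have h := hcons z.val (hvlt z)
    rwa [← hsucc z] at h
  have hadj : ∀ za zb : ZMod l, Co V Adj (x za) (x zb) → za ≠ zb →
      zb = za + 1 ∨ za = zb + 1 := by
    intro za zb hco hne
    by_contra hcon
    push_neg at hcon
    obtain ⟨h1, h2⟩ := hcon
    refine hnon za.val (hvlt za) zb.val (hvlt zb) ?_ ?_ ?_ hco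
    · intro h; exact hne (hvinj h).symm
    · rw [← hsucc]; intro h; exact h1 (hvinj h)
    · rw [← hsucc]; intro h; exact h2 (hvinj h)
  have key : ∀ v ∈ V, 2 ≤ (Set.range x ∩ Reach Adj v).ncard →
      ∃ z, Set.range x ∩ Reach Adj v = {x z, x (z + 1)} := by
    intro v hv h2
    set tr := Set.range x ∩ Reach Adj v with htr
    have htrfin : tr.Finite := (Set.finite_range x).inter_of_left _
    obtain ⟨a, b, ha, hb, hab⟩ := (Set.one_lt_ncard_iff htrfin).mp (by omega)
    obtain ⟨za, rfl⟩ := ha.1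
    obtain ⟨zb, rfl⟩ := hb.1
    have hzab : za ≠ zb := fun h => hab (by rw [h])
    have hz : ∃ z : ZMod l, x z ∈ tr ∧ x (z + 1) ∈ tr := by
      rcases hadj za zb ⟨v, hv, ha.2, hb.2⟩ hzab with h | h
      · exact ⟨za, ha, by rw [← h]; exact hb⟩
      · exact ⟨zb, hb, by rw [← h]; exact ha⟩
    obtain ⟨z, hz1, hz2⟩ := hz
    refine ⟨z, Set.Subset.antisymm ?_ ?_⟩
    · rintro w ⟨⟨zc, rfl⟩, hwr⟩
      rcases eq_or_ne zc z with rfl | hc1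
      · exact Set.mem_insert _ _
      rcases eq_or_ne zc (z + 1) with rfl | hc2
      · exact Set.mem_insert_of_mem _ rfl
      exfalso
      have c1 : z = zc + 1 := by
        rcases hadj z zc ⟨v, hv, hz1.2, hwr⟩ (Ne.symm hc1) with h | h
        · exact absurd h hc2
        · exact h
      have c2 : zc = z + 1 + 1 := by
        rcases hadj (z + 1) zc ⟨v, hv, hz2.2, hwr⟩ (Ne.symm hc2) with h | h
        · exact h
        · exfalso; exact hc1 (by exact (add_right_cancel h).symm)
      rw [c2] at c1
      have e : z + (1 + 1 + 1) = z := by linear_combination - c1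
      exact h30 (add_eq_left.mp e)
    · rintro w hw
      rcases Set.mem_insert_iff.mp hw with rfl | hw2
      · exact hz1
      · rw [Set.mem_singleton_iff.mp hw2]; exact hz2
  choose uy huy using hco'
  have huyV : ∀ z, uy z ∈ V := fun z => (huy z).1
  have huyr : ∀ z, x z ∈ Reach Adj (uy z) ∧ x (z + 1) ∈ Reach Adj (uy z) :=
    fun z => (huy z).2
  have resolve : ∀ s m : ZMod l, (x s = x m ∨ x s = x (m + 1)) →
      (x (s + 1) = x m ∨ x (s + 1) = x (m + 1)) → s = m := by
    intro s m hs hs1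
    rcases hs with h | h
    · exact hxinj h
    · have hsm : s = m + 1 := hxinj h
      rcases hs1 with h' | h'
      · have : s + 1 = m := hxinj h'
        rw [hsm] at this
        exfalso
        have e : m + (1 + 1) = m := by linear_combination this
        exact h20 (add_eq_left.mp e)
      · have : s + 1 = m + 1 := hxinj h'
        have : s = m := add_right_cancel this
        rw [this] at hsm
        exfalso
        have e : m + 1 = m + 0 := by rw [← hsm]; ring
        exact h10 (add_left_cancel e)
  have huyinj : Function.Injective uy := by
    intro s t hst
    by_contra hne
    have htr2 : 2 ≤ (Set.range x ∩ Reach Adj (uy s)).ncard := by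
      have hfin : (Set.range x ∩ Reach Adj (uy s)).Finite :=
        (Set.finite_range x).inter_of_left _
      have : 1 < (Set.range x ∩ Reach Adj (uy s)).ncard := by
        rw [Set.one_lt_ncard_iff hfin]
        exact ⟨x s, x (s + 1), ⟨⟨s, rfl⟩, (huyr s).1⟩, ⟨⟨s + 1, rfl⟩, (huyr s).2⟩,
          fun h => by
            have : s = s + 1 := hxinj h
            exact h10 (add_eq_left.mp this.symm)⟩
      omega
    obtain ⟨m, hm⟩ := key (uy s) (huyV s) htr2
    have hmem : ∀ w, w ∈ Set.range x ∩ Reach Adj (uy s) → w = x m ∨ w = x (m + 1) := by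
      intro w hw; rw [hm] at hw
      rcases Set.mem_insert_iff.mp hw with h | h
      · exact Or.inl h
      · exact Or.inr (Set.mem_singleton_iff.mp h)
    have hs : s = m := resolve s m
      (hmem _ ⟨⟨s, rfl⟩, (huyr s).1⟩) (hmem _ ⟨⟨s + 1, rfl⟩, (huyr s).2⟩)
    have ht : t = m := by
      apply resolve t m
      · exact hmem _ ⟨⟨t, rfl⟩, by rw [hst]; exact (huyr t).1⟩
      · exact hmem _ ⟨⟨t + 1, rfl⟩, by rw [hst]; exact (huyr t).2⟩
    exact hne (hs.trans ht.symm)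
  exact ⟨x, uy, hxinj, huyinj, fun z => hV _ (hvlt z), huyV, huyr, key⟩

end Stmt9Aux

theorem stmt9 (V : Finset ℕ) (Adj : ℕ → ℕ → Prop) (π : ℕ → ℕ)
    (hAdjV : ∀ u v, Adj u v → u ∈ V ∧ v ∈ V)
    (hπ : Set.BijOn π ↑V ↑(Finset.Icc 1 V.card))
    (htopo : ∀ u v, Adj u v → π u < π v)
    (hnocyc : ∀ k, 3 ≤ k → ¬ HasReachCycle V Adj k)
    (k' : ℕ) (hk' : 3 ≤ k')
    (x y : Fin k' → ℕ) (hxy : IsReachSimplexPair V Adj x y)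
    (hmin : ∀ k, 3 ≤ k → HasReachSimplex V Adj k → k' ≤ k)
    (hminord : ∀ x₂ y₂ : Fin k' → ℕ, IsReachSimplexPair V Adj x₂ y₂ →
      ∑ i, π (x i) ≤ ∑ i, π (x₂ i))
    (S : Finset ℕ) (hSV : ∀ v ∈ S, v ∈ V ∧ v ∉ Set.range x)
    (hconn : ∀ u ∈ S, ∀ v ∈ S,
      Relation.ReflTransGen (fun a b => (Adj a b ∨ Adj b a) ∧ a ∈ S ∧ b ∈ S) u v)
    (hreach : ∀ v ∈ S, ∃ i, x i ∈ Reach Adj v) :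
    ¬ ∀ i, ∃ s ∈ S, x i ∈ Reach Adj s := by
  classical
  intro hall
  open Stmt9Aux in
  obtain ⟨hxinj, hyinj, hxV, hyV, hyr, hnoall⟩ := hxy
  -- the clique property of X
  have hclique : ∀ a b : Fin k', a ≠ b → Stmt9Aux.Co V Adj (x a) (x b) := by
    intro a b hab
    have h3 : ∃ t : Fin k', t ≠ a ∧ t ≠ b := by
      by_contra h
      push_neg at h
      have hsub : (Finset.univ : Finset (Fin k')) ⊆ {a, b} := by
        intro t _
        rcases eq_or_ne t a with rfl | hta
        · simp
        · simp [h t hta]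
      have hc := Finset.card_le_card hsub
      have hc2 : ({a, b} : Finset (Fin k')).card ≤ 2 := Finset.card_insert_le a {b}
      rw [Finset.card_univ, Fintype.card_fin] at hc
      omega
    obtain ⟨t, hta, htb⟩ := h3
    exact ⟨y t, hyV t, hyr t a (Ne.symm hta), hyr t b (Ne.symm htb)⟩
  have hSnotx : ∀ s ∈ S, ∀ t : Fin k', s ≠ x t := by
    intro s hs t h
    exact (hSV s hs).2 ⟨t, h.symm⟩
  -- the chordal-attachment claim
  have chordal : ∀ I : Finset (Fin k'), ∃ v ∈ S, ∀ i ∈ I, Stmt9Aux.Co V Adj v (x i) := by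
    intro I
    induction I using Finset.induction_on with
    | empty =>
      obtain ⟨s₀, hs₀, _⟩ := hall ⟨0, by omega⟩
      exact ⟨s₀, hs₀, fun i hi => absurd hi (by simp)⟩
    | @insert i I hiI ih =>
      obtain ⟨v₀, hv₀S, hv₀⟩ := ih
      obtain ⟨w₀, hw₀S, hw₀r⟩ := hall i
      have hw₀co : Stmt9Aux.Co V Adj w₀ (x i) :=
        ⟨w₀, (hSV w₀ hw₀S).1, Relation.ReflTransGen.refl, hw₀r⟩
      set relS : ℕ → ℕ → Prop := fun a b => a ∈ S ∧ b ∈ S ∧ Stmt9Aux.Co V Adj a b with hrelS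
      have hrtg : Relation.ReflTransGen relS v₀ w₀ := by
        refine Relation.ReflTransGen.mono ?_ _ _ (hconn v₀ hv₀S w₀ hw₀S)
        rintro a b ⟨hadj | hadj, haS, hbS⟩
        · exact ⟨haS, hbS, a, (hSV a haS).1, Relation.ReflTransGen.refl,
            Relation.ReflTransGen.single hadj⟩
        · exact ⟨haS, hbS, b, (hSV b hbS).1, Relation.ReflTransGen.single hadj,
            Relation.ReflTransGen.refl⟩
      obtain ⟨n, p, hp0, hstep, hPn, hminp⟩ :=
        Stmt9Aux.exists_min_path relS (fun w => Stmt9Aux.Co V Adj w (x i)) v₀ ⟨w₀, hrtg, hw₀co⟩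
      have hminp2 : ∀ (m : ℕ) (q : ℕ → ℕ), q 0 = p 0 → (∀ j < m, relS (q j) (q (j+1))) →
          Stmt9Aux.Co V Adj (q m) (x i) → n ≤ m :=
        fun m q h0 hs hP => hminp m q (by rw [h0, hp0]) hs hP
      have hpS : ∀ j ≤ n, p j ∈ S := by
        intro j hj
        induction j with
        | zero => rw [hp0]; exact hv₀S
        | succ j ihj => exact (hstep j (by omega)).2.1
      have hearly := Stmt9Aux.min_path_no_early relS (fun w => Stmt9Aux.Co V Adj w (x i))
        n p hstep hminp2
      have hchord := Stmt9Aux.min_path_no_chord relS (fun w => Stmt9Aux.Co V Adj w (x i))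
        n p hstep hPn hminp2
      have hpinj := Stmt9Aux.min_path_inj relS (fun w => Stmt9Aux.Co V Adj w (x i))
        n p hstep hPn hminp2
      by_cases hdone : ∀ i' ∈ I, Stmt9Aux.Co V Adj (p n) (x i')
      · refine ⟨p n, hpS n le_rfl, ?_⟩
        intro i'' hi''
        rcases Finset.mem_insert.mp hi'' with rfl | h
        · exact hPn
        · exact hdone i'' h
      · exfalso
        push_neg at hdone
        obtain ⟨i', hi'I, hnco⟩ := hdone
        have hG0 : Stmt9Aux.Co V Adj (p 0) (x i') := by rw [hp0]; exact hv₀ i' hi'I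
        set j₀ := Nat.findGreatest (fun j => Stmt9Aux.Co V Adj (p j) (x i')) n with hj₀
        have hj₀G : Stmt9Aux.Co V Adj (p j₀) (x i') :=
          Nat.findGreatest_spec (P := fun j => Stmt9Aux.Co V Adj (p j) (x i'))
            (Nat.zero_le n) hG0
        have hj₀max : ∀ j, j₀ < j → j ≤ n → ¬ Stmt9Aux.Co V Adj (p j) (x i') :=
          fun j h1 h2 => Nat.findGreatest_is_greatest
            (P := fun j => Stmt9Aux.Co V Adj (p j) (x i')) h1 h2
        have hj₀n : j₀ ≤ n := Nat.findGreatest_le n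
        have hj₀lt : j₀ < n := by
          rcases Nat.eq_or_lt_of_le hj₀n with h | h
          · exfalso; apply hnco; rw [← h]; exact hj₀G
          · exact h
        set l := n - j₀ + 3 with hldef
        have hl4 : 4 ≤ l := by omega
        set cc : ℕ → ℕ := fun m => if m = 0 then x i else if m = 1 then x i'
          else p (j₀ + (m - 2)) with hcc
        have hcc0 : cc 0 = x i := by simp [hcc]
        have hcc1 : cc 1 = x i' := by simp [hcc]
        have hcc2 : ∀ m, 2 ≤ m → cc m = p (j₀ + (m - 2)) := by
          intro m hm
          simp only [hcc]
          rw [if_neg (by omega), if_neg (by omega)]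
        have hii' : i ≠ i' := fun h => hiI (h ▸ hi'I)
        have hmod : ∀ a, a < l → (a + 1) % l = if a = l - 1 then 0 else a + 1 := by
          intro a ha
          split_ifs with h
          · rw [show a + 1 = l by omega]; exact Nat.mod_self l
          · exact Nat.mod_eq_of_lt (by omega)
        have hnochordco : ∀ a b, a + 2 ≤ b → b ≤ n → ¬ Stmt9Aux.Co V Adj (p a) (p b) := by
          intro a b h1 h2 hco
          exact hchord a b h1 h2 ⟨hpS a (by omega), hpS b h2, hco⟩
        apply hnocyc l (by omega)
        apply Stmt9Aux.induced_cycle V Adj l hl4 cc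
        · -- injectivity
          intro m hm m' hm' heq
          by_cases e0 : m = 0 <;> by_cases e0' : m' = 0 <;>
            by_cases e1 : m = 1 <;> by_cases e1' : m' = 1
          all_goals try omega
          · -- m = 0, m' = 1
            subst e0; subst e1'
            rw [hcc0, hcc1] at heq
            exact absurd (hxinj heq) hii'
          · -- m = 0, m' ≥ 2
            subst e0
            rw [hcc0, hcc2 m' (by omega)] at heq
            exact absurd heq.symm (hSnotx _ (hpS _ (by omega)) i)
          · -- m = 1, m' = 0
            subst e1; subst e0'
            rw [hcc1, hcc0] at heq
            exact absurd (hxinj heq.symm) hii'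
          · -- m ≥ 2, m' = 0
            subst e0'
            rw [hcc0, hcc2 m (by omega)] at heq
            exact absurd heq (hSnotx _ (hpS _ (by omega)) i)
          · -- m = 1, m' ≥ 2
            subst e1
            rw [hcc1, hcc2 m' (by omega)] at heq
            exact absurd heq.symm (hSnotx _ (hpS _ (by omega)) i')
          · -- m ≥ 2, m' = 1
            subst e1'
            rw [hcc1, hcc2 m (by omega)] at heq
            exact absurd heq (hSnotx _ (hpS _ (by omega)) i')
          · -- m, m' ≥ 2
            rw [hcc2 m (by omega), hcc2 m' (by omega)] at heq
            rcases lt_trichotomy (j₀ + (m - 2)) (j₀ + (m' - 2)) with h | h | h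
            · exact absurd heq (hpinj _ _ h (by omega))
            · omega
            · exact absurd heq.symm (hpinj _ _ h (by omega))
        · -- membership in V
          intro m hm
          by_cases e0 : m = 0
          · subst e0; rw [hcc0]; exact hxV i
          by_cases e1 : m = 1
          · subst e1; rw [hcc1]; exact hxV i'
          · rw [hcc2 m (by omega)]
            exact (hSV _ (hpS _ (by omega))).1
        · -- consecutive coreachability
          intro m hm
          rw [hmod m hm]
          split_ifs with hml
          · -- m = l - 1 : (p n, x i)
            subst hml
            rw [hcc2 (l-1) (by omega), hcc0]
            have : j₀ + (l - 1 - 2) = n := by omega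
            rw [this]
            exact hPn
          · by_cases e0 : m = 0
            · subst e0; rw [hcc0, hcc1]; exact hclique i i' hii'
            by_cases e1 : m = 1
            · subst e1
              rw [hcc1, hcc2 2 (by omega)]
              have : j₀ + (2 - 2) = j₀ := by omega
              rw [this]
              exact Stmt9Aux.co_symm hj₀G
            · rw [hcc2 m (by omega), hcc2 (m+1) (by omega)]
              have h2 : j₀ + (m + 1 - 2) = (j₀ + (m - 2)) + 1 := by omega
              rw [h2]
              have hst := hstep (j₀ + (m - 2)) (by omega)
              exact hst.2.2
        · -- non-consecutive non-coreachability
          intro m hm m' hm' hne h2 h3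
          rw [hmod m hm] at h2
          rw [hmod m' hm'] at h3
          by_cases e0 : m = 0
          · subst e0
            rw [hcc0]
            have hm'2 : 2 ≤ m' := by
              rw [if_neg (by omega : ¬ (0 = l - 1))] at h2
              omega
            have hm'top : m' ≠ l - 1 := by
              intro h; rw [if_pos h] at h3; omega
            rw [hcc2 m' hm'2]
            intro hco
            exact hearly (j₀ + (m' - 2)) (by omega) (Stmt9Aux.co_symm hco)
          by_cases e1 : m = 1
          · subst e1
            rw [hcc1]
            have hm'3 : 3 ≤ m' := by
              rw [if_neg (by omega : ¬ (1 = l - 1))] at h2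
              by_cases hz : m' = 0
              · subst hz
                rw [if_neg (by omega : ¬ (0 = l - 1))] at h3
                omega
              · omega
            rw [hcc2 m' (by omega)]
            intro hco
            exact hj₀max (j₀ + (m' - 2)) (by omega) (by omega) (Stmt9Aux.co_symm hco)
          by_cases e0' : m' = 0
          · subst e0'
            rw [hcc0, hcc2 m (by omega)]
            have hmtop : m ≠ l - 1 := by
              intro h; rw [if_pos h] at h2; omega
            intro hco
            exact hearly (j₀ + (m - 2)) (by omega) hco
          by_cases e1' : m' = 1
          · subst e1'
            rw [hcc1, hcc2 m (by omega)]
            have hm3 : 3 ≤ m := by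
              rw [if_neg (by omega : ¬ (1 = l - 1))] at h3
              omega
            intro hco
            exact hj₀max (j₀ + (m - 2)) (by omega) (by omega) hco
          · -- both ≥ 2
            rw [hcc2 m (by omega), hcc2 m' (by omega)]
            have hsep : m + 2 ≤ m' ∨ m' + 2 ≤ m := by
              rcases Nat.lt_or_ge (m+1) l with hx1 | hx1
              · rw [if_neg (by omega)] at h2
                rcases Nat.lt_or_ge (m'+1) l with hx2 | hx2
                · rw [if_neg (by omega)] at h3; omega
                · omega
              · rcases Nat.lt_or_ge (m'+1) l with hx2 | hx2
                · rw [if_neg (by omega)] at h3; omega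
                · omega
            rcases hsep with h | h
            · exact hnochordco _ _ (by omega) (by omega)
            · intro hco
              exact hnochordco _ _ (by omega : (j₀ + (m' - 2)) + 2 ≤ j₀ + (m - 2))
                (by omega) (Stmt9Aux.co_symm hco)
  -- final construction
  obtain ⟨v, hvS, hvco⟩ := chordal Finset.univ
  obtain ⟨i₀, hi₀r⟩ := hreach v hvS
  set XF := Finset.image x Finset.univ with hXF
  have hXFcard : XF.card = k' := by
    rw [hXF, Finset.card_image_of_injective _ hxinj, Finset.card_univ, Fintype.card_fin]
  have hvX : v ∉ XF := by
    intro h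
    obtain ⟨t, _, ht⟩ := Finset.mem_image.mp h
    exact hSnotx v hvS t ht.symm
  have hxi₀XF : x i₀ ∈ XF := Finset.mem_image_of_mem x (Finset.mem_univ i₀)
  set T := insert v (XF.erase (x i₀)) with hT
  have hvXe : v ∉ XF.erase (x i₀) := fun h => hvX (Finset.mem_of_mem_erase h)
  have hTcard : T.card = k' := by
    rw [hT, Finset.card_insert_of_notMem hvXe, Finset.card_erase_of_mem hxi₀XF, hXFcard]
    omega
  have hTV : ∀ a ∈ T, a ∈ V := by
    intro a ha
    rcases Finset.mem_insert.mp ha with rfl | h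
    · exact (hSV _ hvS).1
    · obtain ⟨t, _, rfl⟩ := Finset.mem_image.mp (Finset.mem_of_mem_erase h)
      exact hxV t
  have hTpair : ∀ a ∈ T, ∀ b ∈ T, a ≠ b → Stmt9Aux.Co V Adj a b := by
    intro a ha b hb hab
    rcases Finset.mem_insert.mp ha with rfl | ha'
    · rcases Finset.mem_insert.mp hb with rfl | hb'
      · exact absurd rfl hab
      · obtain ⟨t, _, rfl⟩ := Finset.mem_image.mp (Finset.mem_of_mem_erase hb')
        exact hvco t (Finset.mem_univ t)
    · obtain ⟨t, _, rfl⟩ := Finset.mem_image.mp (Finset.mem_of_mem_erase ha')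
      rcases Finset.mem_insert.mp hb with rfl | hb'
      · exact Stmt9Aux.co_symm (hvco t (Finset.mem_univ t))
      · obtain ⟨t', _, rfl⟩ := Finset.mem_image.mp (Finset.mem_of_mem_erase hb')
        exact hclique t t' (fun h => hab (h ▸ rfl))
  have hnJT : ¬ Stmt9Aux.JR V Adj T := by
    rintro ⟨u, hu, hur⟩
    apply hnoall
    refine ⟨u, hu, fun t => ?_⟩
    rcases eq_or_ne t i₀ with rfl | ht
    · exact Stmt9Aux.reach_trans (hur v (Finset.mem_insert_self _ _)) hi₀r
    · apply hur
      exact Finset.mem_insert_of_mem (Finset.mem_erase.mpr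
        ⟨fun h => ht (hxinj h), Finset.mem_image_of_mem x (Finset.mem_univ t)⟩)
  -- minimal non-jointly-reachable subset
  set F := T.powerset.filter (fun B => ¬ Stmt9Aux.JR V Adj B) with hF
  have hFne : F.Nonempty :=
    ⟨T, Finset.mem_filter.mpr ⟨Finset.mem_powerset_self T, hnJT⟩⟩
  obtain ⟨M, hMF, hMmin⟩ : ∃ M ∈ F, ∀ B ∈ F, ¬ B < M := by
    obtain ⟨M, hM⟩ := Finset.exists_minimal hFne
    exact ⟨M, hM.1, fun B hB hlt => hlt.not_ge (hM.2 hB hlt.le)⟩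
  have hMT : M ⊆ T := Finset.mem_powerset.mp (Finset.mem_filter.mp hMF).1
  have hMnJ : ¬ Stmt9Aux.JR V Adj M := (Finset.mem_filter.mp hMF).2
  have hJer : ∀ a ∈ M, Stmt9Aux.JR V Adj (M.erase a) := by
    intro a ha
    by_contra h
    exact hMmin (M.erase a)
      (Finset.mem_filter.mpr ⟨Finset.mem_powerset.mpr ((Finset.erase_subset a M).trans hMT), h⟩)
      (Finset.erase_ssubset ha)
  have hM3 : 3 ≤ M.card := by
    by_contra hcon
    push_neg at hcon
    have h0 : M.card = 0 ∨ M.card = 1 ∨ M.card = 2 := by omega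
    rcases h0 with h0 | h0 | h0
    · rw [Finset.card_eq_zero] at h0
      subst h0
      exact hMnJ ⟨x i₀, hxV i₀, fun a ha => absurd ha (Finset.notMem_empty a)⟩
    · obtain ⟨a, rfl⟩ := Finset.card_eq_one.mp h0
      apply hMnJ
      refine ⟨a, hTV a (hMT (Finset.mem_singleton_self a)), ?_⟩
      intro b hb
      rw [Finset.mem_singleton.mp hb]
      exact Relation.ReflTransGen.refl
    · obtain ⟨a, b, hab, rfl⟩ := Finset.card_eq_two.mp h0
      obtain ⟨u, hu, h1, h2⟩ := hTpair a (hMT (by simp)) b (hMT (by simp)) hab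
      apply hMnJ
      refine ⟨u, hu, fun d hd => ?_⟩
      rcases Finset.mem_insert.mp hd with rfl | hd'
      · exact h1
      · rw [Finset.mem_singleton.mp hd']
        exact h2
  have hsx : HasReachSimplex V Adj M.card := by
    obtain ⟨x₂, y₂, hp, _⟩ :=
      Stmt9Aux.simplex_of_minimal V Adj M M.card rfl (fun a ha => hTV a (hMT ha)) hJer hMnJ
    exact ⟨x₂, y₂, hp⟩
  have hkM := hmin M.card hM3 hsx
  have hMeq : M = T := Finset.eq_of_subset_of_card_le hMT (by omega)
  obtain ⟨x₂, y₂, hp, himg⟩ :=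
    Stmt9Aux.simplex_of_minimal V Adj T k' hTcard hTV (hMeq ▸ hJer) hnJT
  -- the sum comparison
  have hsum2 : ∑ a ∈ T, π a = ∑ t, π (x₂ t) := by
    rw [← himg]
    rw [Finset.sum_image (fun a _ b _ h => hp.1 h)]
  have hsumX : ∑ t, π (x t) = ∑ a ∈ XF, π a := by
    rw [hXF, Finset.sum_image (fun a _ b _ h => hxinj h)]
  have hTsum : ∑ a ∈ T, π a = π v + ∑ a ∈ XF.erase (x i₀), π a := Finset.sum_insert hvXe
  have hXsum : π (x i₀) + ∑ a ∈ XF.erase (x i₀), π a = ∑ a ∈ XF, π a :=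
    Finset.add_sum_erase XF π hxi₀XF
  have hlt : π v < π (x i₀) := Stmt9Aux.pi_lt π htopo hi₀r (hSnotx v hvS i₀)
  have hord := hminord x₂ y₂ hp
  rw [← hsum2, hTsum, hsumX, ← hXsum] at hord
  omega

end
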